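/- arXiv:2202.06394 — 3 statements merged into one kernel-verified Lean document; each statement's English description precedes it below -/
import Mathlib

section
/- Consider the reflection I : Cat → Preord sending a small category to the preorder on its objects where x ≤ y iff there exists a morphism x → y, with unit η_C : C → HI(C). A functor f : A → B is a trivial covering (the naturality square of η at f, i.e., the square with sides f, η_A, η_B, I(f), is a pullback in Cat) if and only if for every pair of objects a, a' in A with Hom_A(a,a') nonempty, the induced map Hom_A(a,a') → Hom_B(f a, f a') is a bijection. -/
open CategoryTheory
universe u

/-- The objects of a small category, regarded as carrying the reflected preorder. -/
def PreOb (A : Cat.{u, u}) : Type u := A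

instance instPreObPreorder (A : Cat.{u, u}) : Preorder (PreOb A) where
  le x y := Nonempty ((show ↑A from x) ⟶ (show ↑A from y))
  le_refl x := ⟨𝟙 _⟩
  le_trans _ _ _ h h' := ⟨h.some ≫ h'.some⟩

/-- The reflection `I : Cat → Preord` on objects (regarded as landing in `Cat`). -/
def ICat (A : Cat.{u, u}) : Cat.{u, u} := Cat.of (PreOb A)

instance (A : Cat.{u, u}) : Preorder ↑(ICat A) := instPreObPreorder A

/-- In the reflected preorder, a morphism of `A` witnesses an inequality. -/
def toLe {A : Cat.{u, u}} {x y : ↑A} (g : x ⟶ y) :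
    (show PreOb A from x) ≤ (show PreOb A from y) := ⟨g⟩

/-- The unit of the reflection `Cat → Preord`. -/
def etaF (A : Cat.{u, u}) : A ⟶ ICat A where
  toFunctor.obj x := (show PreOb A from x)
  toFunctor.map {_x _y} g := homOfLE (toLe g)
  toFunctor.map_id _ := rfl
  toFunctor.map_comp _ _ := rfl

/-- The reflection `I : Cat → Preord` on morphisms. -/
def IFun {A B : Cat.{u, u}} (f : A ⟶ B) : ICat A ⟶ ICat B where
  toFunctor.obj x := (show PreOb B from f.toFunctor.obj (show ↑A from x))
  toFunctor.map {_x _y} g := homOfLE (Nonempty.map (fun h => f.toFunctor.map h) (leOfHom g))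
  toFunctor.map_id _ := rfl
  toFunctor.map_comp _ _ := rfl

/-- `f` is a trivial covering when its naturality square for the unit is a pullback in `Cat`. -/
def TrivialCov {A B : Cat.{u, u}} (f : A ⟶ B) : Prop :=
  IsPullback (etaF A) f (IFun f) (etaF B)


open Limits

lemma toPre_ext {X A : Cat.{u,u}} (F G : X ⟶ ICat A) (h : ∀ x, F.toFunctor.obj x = G.toFunctor.obj x) : F = G :=
  Cat.Hom.ext (CategoryTheory.Functor.ext h (fun x y _ => Subsingleton.elim (α := (show PreOb A from F.toFunctor.obj x) ⟶ (show PreOb A from F.toFunctor.obj y)) _ _))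

def WA : Cat.{u,u} := Cat.of (AsSmall.{u} (Fin 2))

def arr {C : Cat.{u,u}} {a a' : ↑C} (g : a ⟶ a') : WA.{u} ⟶ C :=
  (AsSmall.down ⋙ ComposableArrows.mk₁ g).toCatHom

def o0 : ↑WA.{u} := AsSmall.up.obj 0
def o1 : ↑WA.{u} := AsSmall.up.obj 1
def w01 : o0.{u} ⟶ o1.{u} := AsSmall.up.map (homOfLE (by decide))

lemma arr_comp {C D : Cat.{u,u}} {a a' : ↑C} (g : a ⟶ a') (F : C ⟶ D) :
    arr g ≫ F = arr (F.toFunctor.map g) := by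
  apply Cat.Hom.ext
  show AsSmall.down ⋙ (ComposableArrows.mk₁ g ⋙ F.toFunctor) = _
  rw [show ComposableArrows.mk₁ g ⋙ F.toFunctor = ComposableArrows.mk₁ (F.toFunctor.map g) from
    ComposableArrows.ext₁ rfl rfl (by simp [ComposableArrows.hom]; erw [eqToHom_refl, eqToHom_refl, Category.id_comp, Category.comp_id]; rfl)]
  rfl

lemma arr_obj_cases (x : ↑WA.{u}) : x = o0.{u} ∨ x = o1.{u} := by
  rcases x with ⟨⟨_ | _ | n, hn⟩⟩
  · exact Or.inl rfl
  · exact Or.inr rfl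
  · omega

section
variable {A B : Cat.{u,u}} (f : A ⟶ B)

abbrev HomCond : Prop :=
  ∀ a a' : ↑A, Nonempty (a ⟶ a') → Function.Bijective (fun g : a ⟶ a' => f.toFunctor.map g)

lemma sObjEq (s : PullbackCone (IFun f) (etaF B)) (x : ↑s.pt) :
    f.toFunctor.obj (s.fst.toFunctor.obj x) = s.snd.toFunctor.obj x :=
  Functor.congr_obj (congrArg Cat.Hom.toFunctor s.condition) x

noncomputable def liftMap (hb : HomCond f) (s : PullbackCone (IFun f) (etaF B))
    {x y : ↑s.pt} (φ : x ⟶ y) : (show ↑A from s.fst.toFunctor.obj x) ⟶ (show ↑A from s.fst.toFunctor.obj y) :=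
  Function.surjInv (hb _ _ (leOfHom (s.fst.toFunctor.map φ))).2
    (eqToHom (sObjEq f s x) ≫ s.snd.toFunctor.map φ ≫ eqToHom (sObjEq f s y).symm)

lemma f_map_liftMap (hb : HomCond f) (s : PullbackCone (IFun f) (etaF B))
    {x y : ↑s.pt} (φ : x ⟶ y) :
    f.toFunctor.map (liftMap f hb s φ) =
      eqToHom (sObjEq f s x) ≫ s.snd.toFunctor.map φ ≫ eqToHom (sObjEq f s y).symm :=
  Function.surjInv_eq _ _

noncomputable def liftF (hb : HomCond f) (s : PullbackCone (IFun f) (etaF B)) :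
    ↑s.pt ⥤ ↑A where
  obj x := (show ↑A from s.fst.toFunctor.obj x)
  map {x y} φ := liftMap f hb s φ
  map_id x := by
    refine (hb _ _ ⟨𝟙 _⟩).1 ?_
    show f.toFunctor.map _ = f.toFunctor.map _
    rw [f_map_liftMap]
    simp
    exact (f.toFunctor.map_id _).symm
  map_comp {x y z} φ ψ := by
    refine (hb _ _ (leOfHom (s.fst.toFunctor.map (φ ≫ ψ)))).1 ?_
    show f.toFunctor.map _ = f.toFunctor.map _
    rw [f_map_liftMap, f.toFunctor.map_comp, f_map_liftMap, f_map_liftMap]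
    simp

lemma liftF_map (hb : HomCond f) (s : PullbackCone (IFun f) (etaF B))
    {x y : ↑s.pt} (φ : x ⟶ y) : (liftF f hb s).map φ = liftMap f hb s φ := rfl

lemma liftF_fac_left (hb : HomCond f) (s : PullbackCone (IFun f) (etaF B)) :
    (show s.pt ⟶ A from (liftF f hb s).toCatHom) ≫ etaF A = s.fst :=
  toPre_ext _ _ (fun _ => rfl)

lemma liftF_fac_right (hb : HomCond f) (s : PullbackCone (IFun f) (etaF B)) :
    (show s.pt ⟶ A from (liftF f hb s).toCatHom) ≫ f = s.snd := by
  apply Cat.Hom.ext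
  refine CategoryTheory.Functor.ext (fun x => (sObjEq f s x)) ?_
  intro x y φ
  show f.toFunctor.map ((liftF f hb s).map φ) = _
  exact f_map_liftMap f hb s φ

lemma liftF_uniq (hb : HomCond f) (s : PullbackCone (IFun f) (etaF B))
    (m : s.pt ⟶ A) (h1 : m ≫ etaF A = s.fst) (h2 : m ≫ f = s.snd) :
    m = (show s.pt ⟶ A from (liftF f hb s).toCatHom) := by
  have hobj : ∀ x : ↑s.pt, m.toFunctor.obj x = (liftF f hb s).obj x := fun x =>
    Functor.congr_obj (congrArg Cat.Hom.toFunctor h1) x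
  apply Cat.Hom.ext
  refine CategoryTheory.Functor.ext hobj (fun x y φ => ?_)
  refine (hb (m.toFunctor.obj x) (m.toFunctor.obj y) ⟨m.toFunctor.map φ⟩).1 ?_
  show f.toFunctor.map _ = f.toFunctor.map _
  have h2' : f.toFunctor.map (m.toFunctor.map φ) =
      eqToHom (Functor.congr_obj (congrArg Cat.Hom.toFunctor h2) x) ≫ s.snd.toFunctor.map φ ≫ eqToHom (Functor.congr_obj (congrArg Cat.Hom.toFunctor h2) y).symm :=
    Functor.congr_hom (congrArg Cat.Hom.toFunctor h2) φ
  rw [h2']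
  simp only [Functor.map_comp, eqToHom_map, liftF_map, f_map_liftMap]
  simp
  have h3 : f.toFunctor.map ((liftF f hb s).map φ) = _ := f_map_liftMap f hb s φ
  erw [h3]
  erw [Category.assoc, Category.assoc, eqToHom_trans_assoc, eqToHom_trans]

lemma forward (hp : TrivialCov f) : HomCond f := by
  intro a a' hne
  obtain ⟨h⟩ := hne
  constructor
  · intro g g' hgg'
    have h1 : arr g ≫ etaF A = arr g' ≫ etaF A := toPre_ext _ _ (fun x => rfl)
    have h2 : arr g ≫ f = arr g' ≫ f := by
      rw [arr_comp, arr_comp]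
      show arr (f.toFunctor.map g) = arr (f.toFunctor.map g')
      rw [show f.toFunctor.map g = f.toFunctor.map g' from hgg']
    have heq : arr g = arr g' := hp.hom_ext h1 h2
    exact eq_of_heq (congr_arg_heq (fun (F : WA.{u} ⟶ A) => F.toFunctor.map w01) heq)
  · intro k
    have comm : arr (homOfLE (toLe h)) ≫ IFun f = arr k ≫ etaF B := by
      apply toPre_ext
      intro x
      rcases arr_obj_cases x with rfl | rfl <;> rfl
    let l := hp.lift (arr (homOfLE (toLe h))) (arr k) comm
    have hl1 : l ≫ etaF A = arr (homOfLE (toLe h)) := hp.lift_fst _ _ _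
    have hl2 : l ≫ f = arr k := hp.lift_snd _ _ _
    have e0 : (show ↑A from l.toFunctor.obj o0) = a := Functor.congr_obj (congrArg Cat.Hom.toFunctor hl1) o0
    have e1 : (show ↑A from l.toFunctor.obj o1) = a' := Functor.congr_obj (congrArg Cat.Hom.toFunctor hl1) o1
    refine ⟨eqToHom e0.symm ≫ l.toFunctor.map w01 ≫ eqToHom e1, ?_⟩
    show f.toFunctor.map _ = k
    have hk : f.toFunctor.map (l.toFunctor.map w01) =
        eqToHom (Functor.congr_obj (congrArg Cat.Hom.toFunctor hl2) o0) ≫ (arr k).toFunctor.map w01 ≫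
          eqToHom (Functor.congr_obj (congrArg Cat.Hom.toFunctor hl2) o1).symm :=
      Functor.congr_hom (congrArg Cat.Hom.toFunctor hl2) w01
    rw [f.toFunctor.map_comp, f.toFunctor.map_comp, eqToHom_map, eqToHom_map, hk,
      show (arr k).toFunctor.map w01 = k from rfl]
    simp [eqToHom_trans]
    erw [Category.assoc, eqToHom_trans, eqToHom_refl, eqToHom_refl, Category.comp_id, Category.id_comp]

lemma backward (hb : HomCond f) : TrivialCov f := by
  apply IsPullback.of_isLimit' ⟨toPre_ext (etaF A ≫ IFun f) (f ≫ etaF B) (fun _ => rfl)⟩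
  apply PullbackCone.IsLimit.mk _ (fun s => (show s.pt ⟶ A from (liftF f hb s).toCatHom))
    (liftF_fac_left f hb) (liftF_fac_right f hb) (liftF_uniq f hb)

end


/-- A functor `f : A ⟶ B` is a trivial covering for the reflection `Cat → Preord`
iff it induces bijections on all nonempty hom-sets. -/
theorem trivialCov_iff_bijective_on_nonempty_homs {A B : Cat.{u, u}} (f : A ⟶ B) :
    TrivialCov f ↔
      ∀ a a' : ↑A, Nonempty (a ⟶ a') →
        Function.Bijective (fun g : a ⟶ a' => f.toFunctor.map g) :=
  ⟨forward f, backward f⟩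
end

section
/- For the reflection I : Cat → Preord with unit η, and for any small category C and any functor μ : T → HI(C) from the preorder T with exactly two objects a, a' and a single non-identity relation a ≤ a', the pullback C_μ = C ×_{HI(C)} T (the 'connected component' of μ) satisfies I(C_μ) ≅ T. Consequently the reflection I : Cat → Preord is semi-left-exact (admissible): I preserves the pullback of η_C against any morphism from a preorder in the image of H. -/
open CategoryTheory
universe u

/-- The preorder `T` with two objects `a ≤ a'` and a single non-identity arrow,
regarded as a category. -/
noncomputable def TCat : Cat.{u, u} := Cat.of (ULift.{u} Bool)

noncomputable instance : Preorder ↑TCat.{u} :=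
  inferInstanceAs (Preorder (ULift.{u} Bool))

noncomputable instance : DecidableEq ↑TCat.{u} := fun _ _ => Classical.dec _

instance instICatHomSub (A : Cat.{u, u}) (x y : ↑(ICat A)) : Subsingleton (x ⟶ y) :=
  ⟨fun f g => Subsingleton.elim (α := ULift (PLift _)) f g⟩

instance instTCatHomSub (x y : ↑TCat.{u}) : Subsingleton (x ⟶ y) :=
  ⟨fun f g => Subsingleton.elim (α := ULift (PLift _)) f g⟩

lemma TCat_le_total {x y : ULift.{u} Bool} (h : x ≤ y) (hne : x ≠ y) :
    x = ⟨false⟩ ∧ y = ⟨true⟩ := by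
  rcases x with ⟨_ | _⟩ <;> rcases y with ⟨_ | _⟩ <;>
    first
      | exact ⟨rfl, rfl⟩
      | exact absurd rfl hne
      | exact absurd h (by decide)

/-- A functor `TCat ⟶ C` lifting `μ` along the unit. -/
noncomputable def muLift (C : Cat.{u, u}) (μ : TCat.{u} ⟶ ICat C) : TCat.{u} ⟶ C where
  toFunctor.obj t := (show ↑C from μ.toFunctor.obj t)
  toFunctor.map {t t'} g :=
    if h : t = t' then eqToHom (by rw [h]) else (leOfHom (μ.toFunctor.map g)).some
  toFunctor.map_id t := by dsimp only; rw [dif_pos rfl]; rfl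
  toFunctor.map_comp {t t' t''} g g' := by
    by_cases h : t = t'
    · subst h
      by_cases h' : t = t''
      · subst h'; dsimp only; simp only [dif_pos rfl]; exact (Category.comp_id _).symm
      · dsimp only
        rw [Subsingleton.elim (g ≫ g') g']
        simp only [dif_pos rfl]; exact (Category.id_comp _).symm
    · have h2 : t' = t'' := by
        obtain ⟨hx, hy⟩ := TCat_le_total (leOfHom g) h
        subst hy
        rcases t'' with ⟨_ | _⟩
        · exact absurd (leOfHom g') (fun h => absurd (show (true : Bool) ≤ false from h) (by decide))
        · rfl
      subst h2
      dsimp only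
      rw [Subsingleton.elim (g ≫ g') g]
      simp only [dif_pos rfl, dif_neg h]; exact (Category.comp_id _).symm

lemma muLift_comm (C : Cat.{u, u}) (μ : TCat.{u} ⟶ ICat C) :
    muLift C μ ≫ etaF C = 𝟙 TCat.{u} ≫ μ :=
  Cat.ext (CategoryTheory.Functor.ext (fun _ => rfl) (fun _ _ _ => Subsingleton.elim _ _))

/-- The connected component `C_μ` of any `μ : T ⟶ HI(C)` is reflected onto `T`:
`I (C_μ) ≅ T`.  This is semi-left-exactness (admissibility) of `Cat → Preord`. -/
theorem ICat_connected_component_iso_T (C : Cat.{u, u}) (μ : TCat ⟶ ICat C)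
    (P : Cat.{u, u}) (π₁ : P ⟶ C) (π₂ : P ⟶ TCat)
    (hpb : IsPullback π₁ π₂ (etaF C) μ) :
    Nonempty (ICat P ≅ TCat) := by
  classical
  let ℓ : TCat ⟶ P := hpb.lift (muLift C μ) (𝟙 _) (muLift_comm C μ)
  have hℓ₂ : ℓ ≫ π₂ = 𝟙 TCat := hpb.lift_snd _ _ _
  have hobj : ∀ p : ↑P, π₁.toFunctor.obj p = (show ↑C from μ.toFunctor.obj (π₂.toFunctor.obj p)) := fun p =>
    Functor.congr_obj (congrArg Cat.Hom.toFunctor hpb.w) p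
  have hinj : ∀ p q : ↑P, π₂.toFunctor.obj p = π₂.toFunctor.obj q → p = q := by
    intro p q h
    let Pt : Cat.{u, u} := Cat.of (Discrete PUnit.{u + 1})
    let fp : Pt ⟶ P := ((Functor.const ↑Pt).obj p).toCatHom
    let fq : Pt ⟶ P := ((Functor.const ↑Pt).obj q).toCatHom
    have hobjeq : π₁.toFunctor.obj p = π₁.toFunctor.obj q := by
      rw [hobj p, hobj q, h]
    have e1 : fp ≫ π₁ = fq ≫ π₁ :=
      Cat.ext (CategoryTheory.Functor.ext (fun _ => hobjeq) (fun x y f => by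
        show π₁.toFunctor.map (𝟙 p) = eqToHom hobjeq ≫ π₁.toFunctor.map (𝟙 q) ≫ eqToHom _
        simp))
    have e2 : fp ≫ π₂ = fq ≫ π₂ :=
      Cat.ext (CategoryTheory.Functor.ext (fun _ => h) (fun x y f =>
        Subsingleton.elim _ _))
    have : fp = fq := hpb.hom_ext e1 e2
    exact Functor.congr_obj (congrArg Cat.Hom.toFunctor this) ⟨⟨⟩⟩
  have hlp : ∀ p : ↑P, ℓ.toFunctor.obj (π₂.toFunctor.obj p) = p := fun p =>
    hinj _ _ (Functor.congr_obj (congrArg Cat.Hom.toFunctor hℓ₂) (π₂.toFunctor.obj p))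
  let F : ICat P ⟶ TCat :=
    { toFunctor.obj := fun p => π₂.toFunctor.obj (show ↑P from p)
      toFunctor.map := fun {p q} g =>
        homOfLE ((leOfHom g).elim (fun m => leOfHom (π₂.toFunctor.map m)))
      toFunctor.map_id := fun _ => Subsingleton.elim _ _
      toFunctor.map_comp := fun _ _ => Subsingleton.elim _ _ }
  let G : TCat ⟶ ICat P :=
    { toFunctor.obj := fun t => (show PreOb P from ℓ.toFunctor.obj t)
      toFunctor.map := fun {t t'} g => homOfLE (toLe (ℓ.toFunctor.map g))
      toFunctor.map_id := fun _ => rfl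
      toFunctor.map_comp := fun _ _ => rfl }
  refine ⟨⟨F, G, ?_, ?_⟩⟩
  · exact Cat.ext (CategoryTheory.Functor.ext (fun p => hlp p)
      (fun _ _ _ => Subsingleton.elim _ _))
  · exact Cat.ext (CategoryTheory.Functor.ext (fun t => Functor.congr_obj (congrArg Cat.Hom.toFunctor hℓ₂) t)
      (fun _ _ _ => Subsingleton.elim _ _))
end

section
/- For the reflection I : Cat → Preord, given two 'connected components' C_μ = C ×_{HI(C)} T and D_ν = D ×_{HI(D)} T (pullbacks of units η_C, η_D along functors μ, ν from the two-object one-arrow preorder T), the pullback C_μ ×_T D_ν taken over the second projections satisfies I(C_μ ×_T D_ν) ≅ T. Hence the reflection I : Cat → Preord has stable units: I preserves all pullbacks over objects of the form HI(C) of pairs of unit-pullbacks. -/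
open CategoryTheory
universe u

/-! ### Auxiliary constructions for the proof -/

noncomputable instance : Preorder ↑(TCat.{u}) := inferInstanceAs (Preorder (ULift.{u} Bool))

noncomputable instance (X Y : ↑(TCat.{u})) : Subsingleton (X ⟶ Y) :=
  inferInstanceAs (Subsingleton (ULift (PLift _)))

instance (A : Cat.{u,u}) (X Y : ↑(ICat A)) : Subsingleton (X ⟶ Y) :=
  inferInstanceAs (Subsingleton (ULift (PLift _)))

def ptCat : Cat.{u, u} := Cat.of (ULift.{u} PUnit)

instance : Subsingleton ↑(ptCat.{u}) := inferInstanceAs (Subsingleton (ULift.{u} PUnit))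
instance (X Y : ↑(ptCat.{u})) : Subsingleton (X ⟶ Y) :=
  inferInstanceAs (Subsingleton (ULift (PLift _)))

lemma ptCat_ext {A : Cat.{u, u}} {F G : ptCat.{u} ⟶ A}
    (h : F.toFunctor.obj ⟨⟨⟩⟩ = G.toFunctor.obj ⟨⟨⟩⟩) : F = G := by
  apply Cat.ext
  apply CategoryTheory.Functor.ext
  · intro X Y f
    obtain rfl : X = Y := Subsingleton.elim _ _
    obtain rfl : f = 𝟙 X := Subsingleton.elim _ _
    simp
  · intro X
    obtain rfl : X = (⟨⟨⟩⟩ : ULift.{u} PUnit) := Subsingleton.elim _ _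
    exact h

def constF {A : Cat.{u, u}} (x : ↑A) : ptCat.{u} ⟶ A where
  toFunctor.obj _ := x
  toFunctor.map _ := 𝟙 x
  toFunctor.map_id _ := rfl
  toFunctor.map_comp _ _ := (Category.id_comp _).symm

open Classical in
noncomputable def secF {C : Cat.{u, u}} (μ : TCat.{u} ⟶ ICat C) : TCat.{u} ⟶ C where
  toFunctor.obj t := (show ↑C from μ.toFunctor.obj t)
  toFunctor.map {t t'} f :=
    if h : t = t' then eqToHom (by rw [h])
    else (show Nonempty _ from leOfHom (μ.toFunctor.map f)).some
  toFunctor.map_id t := dif_pos rfl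
  toFunctor.map_comp {X Y Z} f g := by
    have hxy : X ≤ Y := leOfHom f
    have hyz : Y ≤ Z := leOfHom g
    by_cases h1 : X = Y
    · subst h1
      by_cases h2 : X = Z
      · subst h2; rw [dif_pos rfl, eqToHom_trans]
      · rw [dif_pos rfl, dif_neg h2, eqToHom_refl, Category.id_comp]
    · by_cases h2 : Y = Z
      · subst h2; rw [dif_pos rfl, dif_neg h1, eqToHom_refl, Category.comp_id]
      · exfalso
        rcases X with ⟨x⟩; rcases Y with ⟨y⟩; rcases Z with ⟨z⟩
        have hxy' : x ≤ y := hxy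
        have hyz' : y ≤ z := hyz
        cases x <;> cases y <;> cases z <;>
          first
            | exact h1 rfl
            | exact h2 rfl
            | exact absurd hxy' (by decide)
            | exact absurd hyz' (by decide)

lemma secF_eta {C : Cat.{u, u}} (μ : TCat.{u} ⟶ ICat C) : secF μ ≫ etaF C = μ := by
  apply Cat.ext
  apply CategoryTheory.Functor.ext
  · intro X Y f; exact Subsingleton.elim _ _
  · intro X; rfl

noncomputable def Fdown {A : Cat.{u, u}} (τ : A ⟶ TCat.{u}) : ICat A ⟶ TCat.{u} where
  toFunctor.obj x := τ.toFunctor.obj (show ↑A from x)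
  toFunctor.map {x y} g := homOfLE (Nonempty.elim (leOfHom g) fun k => leOfHom (τ.toFunctor.map k))
  toFunctor.map_id _ := Subsingleton.elim _ _
  toFunctor.map_comp _ _ := Subsingleton.elim _ _

noncomputable def Gup {A : Cat.{u, u}} (s : TCat.{u} ⟶ A) : TCat.{u} ⟶ ICat A where
  toFunctor.obj t := (show PreOb A from s.toFunctor.obj t)
  toFunctor.map {t t'} g := homOfLE (toLe (s.toFunctor.map g))
  toFunctor.map_id _ := rfl
  toFunctor.map_comp _ _ := rfl

/-- Stable units for the reflection `Cat → Preord`: the pullback over `T` of two connected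
components `C_μ`, `D_ν` is again reflected onto `T`: `I (C_μ ×_T D_ν) ≅ T`. -/
theorem ICat_pullback_of_connected_components_iso_T (C D : Cat.{u, u})
    (μ : TCat ⟶ ICat C) (ν : TCat ⟶ ICat D)
    (Cμ : Cat.{u, u}) (π₁ : Cμ ⟶ C) (π₂ : Cμ ⟶ TCat)
    (hC : IsPullback π₁ π₂ (etaF C) μ)
    (Dν : Cat.{u, u}) (ρ₁ : Dν ⟶ D) (ρ₂ : Dν ⟶ TCat)
    (hD : IsPullback ρ₁ ρ₂ (etaF D) ν)
    (W : Cat.{u, u}) (σ₁ : W ⟶ Cμ) (σ₂ : W ⟶ Dν)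
    (hW : IsPullback σ₁ σ₂ π₂ ρ₂) :
    Nonempty (ICat W ≅ TCat) := by
  have wC : secF μ ≫ etaF C = 𝟙 TCat ≫ μ := by rw [Category.id_comp, secF_eta]
  have wD : secF ν ≫ etaF D = 𝟙 TCat ≫ ν := by rw [Category.id_comp, secF_eta]
  set sC : TCat.{u} ⟶ Cμ := hC.lift (secF μ) (𝟙 TCat) wC with hsC
  set sD : TCat.{u} ⟶ Dν := hD.lift (secF ν) (𝟙 TCat) wD with hsD
  have hsC1 : sC ≫ π₁ = secF μ := hC.lift_fst _ _ _
  have hsC2 : sC ≫ π₂ = 𝟙 TCat := hC.lift_snd _ _ _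
  have hsD1 : sD ≫ ρ₁ = secF ν := hD.lift_fst _ _ _
  have hsD2 : sD ≫ ρ₂ = 𝟙 TCat := hD.lift_snd _ _ _
  have wS : sC ≫ π₂ = sD ≫ ρ₂ := by rw [hsC2, hsD2]
  set s : TCat.{u} ⟶ W := hW.lift sC sD wS with hs
  have hs1 : s ≫ σ₁ = sC := hW.lift_fst _ _ _
  have hs2 : s ≫ σ₂ = sD := hW.lift_snd _ _ _
  set τ : W ⟶ TCat.{u} := σ₁ ≫ π₂ with hτ
  have hτ2 : τ = σ₂ ≫ ρ₂ := hW.w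
  have hst : s ≫ τ = 𝟙 TCat := by
    rw [hτ, ← Category.assoc, hs1, hsC2]
  have key : ∀ x : ↑W, s.toFunctor.obj (τ.toFunctor.obj x) = x := by
    intro x
    have hσ1 : (τ ≫ s) ≫ σ₁ = τ ≫ sC := by rw [Category.assoc, hs1]
    have hσ2 : (τ ≫ s) ≫ σ₂ = τ ≫ sD := by rw [Category.assoc, hs2]
    have hx : constF x ≫ (τ ≫ s) = constF x := by
      apply hW.hom_ext
      · rw [Category.assoc, hσ1]
        apply hC.hom_ext
        · rw [Category.assoc, Category.assoc, Category.assoc, hsC1]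
          apply ptCat_ext
          show (secF μ).toFunctor.obj (τ.toFunctor.obj x) = π₁.toFunctor.obj (σ₁.toFunctor.obj x)
          have h := Functor.congr_obj (congrArg Cat.Hom.toFunctor hC.w) (σ₁.toFunctor.obj x)
          exact ((show (secF μ).toFunctor.obj (τ.toFunctor.obj x)
            = μ.toFunctor.obj (π₂.toFunctor.obj (σ₁.toFunctor.obj x)) from rfl).trans h.symm)
        · rw [Category.assoc, Category.assoc, Category.assoc, hsC2,
            Category.comp_id, ← Category.assoc]
      · rw [Category.assoc, hσ2]
        apply hD.hom_ext
        · rw [Category.assoc, Category.assoc, Category.assoc, hsD1]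
          apply ptCat_ext
          show (secF ν).toFunctor.obj (τ.toFunctor.obj x) = ρ₁.toFunctor.obj (σ₂.toFunctor.obj x)
          have h := Functor.congr_obj (congrArg Cat.Hom.toFunctor hD.w) (σ₂.toFunctor.obj x)
          have hτx : τ.toFunctor.obj x = ρ₂.toFunctor.obj (σ₂.toFunctor.obj x) := Functor.congr_obj (congrArg Cat.Hom.toFunctor hτ2) x
          rw [hτx]
          exact ((show (secF ν).toFunctor.obj (ρ₂.toFunctor.obj (σ₂.toFunctor.obj x))
            = ν.toFunctor.obj (ρ₂.toFunctor.obj (σ₂.toFunctor.obj x)) from rfl).trans h.symm)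
        · rw [Category.assoc, Category.assoc, Category.assoc, hsD2,
            Category.comp_id]
          apply ptCat_ext
          show τ.toFunctor.obj x = ρ₂.toFunctor.obj (σ₂.toFunctor.obj x)
          exact Functor.congr_obj (congrArg Cat.Hom.toFunctor hτ2) x
    exact Functor.congr_obj (congrArg Cat.Hom.toFunctor hx) ⟨⟨⟩⟩
  refine ⟨⟨Fdown τ, Gup s, ?_, ?_⟩⟩
  · apply Cat.ext
    apply CategoryTheory.Functor.ext
    · intro X Y f; exact Subsingleton.elim _ _
    · intro x; exact key x
  · apply Cat.ext
    apply CategoryTheory.Functor.ext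
    · intro X Y f; exact Subsingleton.elim _ _
    · intro t; exact Functor.congr_obj (congrArg Cat.Hom.toFunctor hst) t
end
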